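/- The number of arrays [N(i,j)]_{0 ≤ j < i ≤ H} of nonnegative integers satisfying N(i,i-1) ≥ 1 and Σ_{j=0}^{i-1} N(i,j) ≤ d for all 1 ≤ i ≤ H equals ∏_{i=1}^{H} C(d + i - 1, i). -/

import Mathlib

open Finset

instance finSumLe (k m : ℕ) : Finite {f : Fin k → ℕ // ∑ j, f j ≤ m} := by
  apply Finite.of_injective (fun f => (fun j => (⟨f.1 j, by
      have h1 : f.1 j ≤ ∑ i, f.1 i := Finset.single_le_sum (fun i _ => Nat.zero_le _) (mem_univ j)
      omega⟩ : Fin (m+1))) : _ → (Fin k → Fin (m+1)))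
  intro f g h
  ext j
  exact congrArg Fin.val (congrFun h j)

lemma nat_card_sigma {ι : Type*} [Fintype ι] (β : ι → Type*) [∀ i, Finite (β i)] :
    Nat.card (Σ i, β i) = ∑ i, Nat.card (β i) := by
  letI := fun i => Fintype.ofFinite (β i)
  simp [Nat.card_eq_fintype_card]

lemma sum_choose_aux (k : ℕ) : ∀ n : ℕ, ∑ a ∈ range n, (a + k).choose k = (n + k).choose (k + 1)
  | 0 => by simp [Nat.choose_eq_zero_of_lt (Nat.lt_succ_self k)]
  | n + 1 => by
    rw [Finset.sum_range_succ, sum_choose_aux k n]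
    have : n + 1 + k = (n + k) + 1 := by omega
    rw [this, Nat.choose_succ_succ', add_comm]

lemma cardA : ∀ (k : ℕ) (m : ℕ), Nat.card {f : Fin k → ℕ // ∑ j, f j ≤ m} = (m + k).choose k
  | 0, m => by
    have : Nat.card {f : Fin 0 → ℕ // ∑ j, f j ≤ m} = 1 := by
      apply Nat.card_eq_one_iff_unique.2
      constructor
      · exact ⟨fun f g => Subtype.ext (funext fun j => j.elim0)⟩
      · exact ⟨⟨fun j => j.elim0, by simp⟩⟩
    simp [this]
  | k + 1, m => by
    have e : {f : Fin (k+1) → ℕ // ∑ j, f j ≤ m} ≃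
        Σ a : Fin (m+1), {g : Fin k → ℕ // ∑ j, g j ≤ m - a.val} := by
      refine ⟨fun f => ⟨⟨f.1 0, ?_⟩, ⟨Fin.tail f.1, ?_⟩⟩, fun p => ⟨Fin.cons p.1.val p.2.1, ?_⟩, ?_, ?_⟩
      · have := f.2
        rw [Fin.sum_univ_succ] at this
        omega
      · have := f.2
        rw [Fin.sum_univ_succ] at this
        simp only [Fin.tail]
        omega
      · rw [Fin.sum_cons]
        have h1 := p.1.2
        have h2 := p.2.2
        omega
      · intro f
        apply Subtype.ext
        exact Fin.cons_self_tail f.1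
      · rintro ⟨a, g⟩
        simp [Fin.tail_cons]
        exact HEq.rfl
    rw [Nat.card_congr e, nat_card_sigma]
    have : ∀ a : Fin (m+1), Nat.card {g : Fin k → ℕ // ∑ j, g j ≤ m - a.val}
        = (m - a.val + k).choose k := fun a => cardA k (m - a.val)
    rw [Finset.sum_congr rfl (fun a _ => this a)]
    rw [Fin.sum_univ_eq_sum_range (fun a => (m - a + k).choose k)]
    rw [← Finset.sum_range_reflect]
    have : ∀ a ∈ range (m+1), (m - (m + 1 - 1 - a) + k).choose k = (a + k).choose k := by
      intro a ha
      simp only [mem_range] at ha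
      congr 2
      omega
    rw [Finset.sum_congr rfl this, sum_choose_aux]
    congr 1
    omega

lemma cardB (k d : ℕ) (hd : 1 ≤ d) (i₀ : Fin k) :
    Nat.card {f : Fin k → ℕ // 1 ≤ f i₀ ∧ ∑ j, f j ≤ d} = (d + k - 1).choose k := by
  have key : ∀ (g : Fin k → ℕ) (b : ℕ), ∑ j, Function.update g i₀ b j = b + (∑ j, g j - g i₀) := by
    intro g b
    rw [Finset.sum_update_of_mem (mem_univ i₀), Finset.sdiff_singleton_eq_erase]
    have : ∑ j ∈ univ.erase i₀, g j = ∑ j, g j - g i₀ := by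
      have := Finset.add_sum_erase univ g (mem_univ i₀)
      omega
    omega
  have e : {g : Fin k → ℕ // ∑ j, g j ≤ d - 1} ≃ {f : Fin k → ℕ // 1 ≤ f i₀ ∧ ∑ j, f j ≤ d} := by
    refine ⟨fun g => ⟨Function.update g.1 i₀ (g.1 i₀ + 1), ?_, ?_⟩,
      fun f => ⟨Function.update f.1 i₀ (f.1 i₀ - 1), ?_⟩, ?_, ?_⟩
    · simp [Function.update_self]
    · rw [key]
      have hle : g.1 i₀ ≤ ∑ j, g.1 j := Finset.single_le_sum (fun i _ => Nat.zero_le _) (mem_univ i₀)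
      have := g.2
      omega
    · rw [key]
      have hle : f.1 i₀ ≤ ∑ j, f.1 j := Finset.single_le_sum (fun i _ => Nat.zero_le _) (mem_univ i₀)
      have h1 := f.2.1
      have h2 := f.2.2
      omega
    · intro g
      apply Subtype.ext
      simp [Function.update_idem, Function.update_self, Function.update_eq_self]
    · intro f
      apply Subtype.ext
      have h1 := f.2.1
      simp only [Function.update_idem, Function.update_self]
      rw [Nat.sub_add_cancel h1, Function.update_eq_self]
  rw [← Nat.card_congr e, cardA]
  congr 1
  omega

lemma cardC (d : ℕ) (hd : 1 ≤ d) (n : ℕ) :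
    Nat.card {f : Fin n → ℕ // ∀ h : 0 < n, 1 ≤ f ⟨n - 1, by omega⟩ ∧ ∑ j, f j ≤ d}
      = if n = 0 then 1 else (d + n - 1).choose n := by
  rcases n with _ | k
  · simp only [if_pos rfl]
    apply Nat.card_eq_one_iff_unique.2
    constructor
    · exact ⟨fun f g => Subtype.ext (funext fun j => j.elim0)⟩
    · exact ⟨⟨fun j => j.elim0, by intro h; omega⟩⟩
  · rw [if_neg (Nat.succ_ne_zero k)]
    have e : {f : Fin (k+1) → ℕ // ∀ h : 0 < k + 1, 1 ≤ f ⟨k + 1 - 1, by omega⟩ ∧ ∑ j, f j ≤ d}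
        ≃ {f : Fin (k+1) → ℕ // 1 ≤ f ⟨k + 1 - 1, by omega⟩ ∧ ∑ j, f j ≤ d} :=
      Equiv.subtypeEquivRight (fun f => by
        constructor
        · intro h; exact h (Nat.succ_pos k)
        · intro h _; exact h)
    rw [Nat.card_congr e, cardB _ _ hd]

/-- The number of arrays `[N(i,j)]_{0 ≤ j < i ≤ H}` of nonnegative integers with
`N(i, i-1) ≥ 1` and `∑_{j=0}^{i-1} N(i,j) ≤ d` for all `1 ≤ i ≤ H` equals
`∏_{i=1}^{H} C(d + i - 1, i)`. -/
theorem stmt_2 (H d : ℕ) (hH : 1 ≤ H) (hd : 1 ≤ d) :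
    Nat.card {N : (i : Fin (H + 1)) → Fin i.val → ℕ //
        ∀ i : Fin (H + 1), ∀ h : 0 < i.val,
          1 ≤ N i ⟨i.val - 1, by omega⟩ ∧ ∑ j, N i j ≤ d} =
      ∏ i ∈ Finset.Icc 1 H, Nat.choose (d + i - 1) i := by
  rw [Nat.card_congr (Equiv.subtypePiEquivPi
      (p := fun (i : Fin (H+1)) (f : Fin i.val → ℕ) =>
        ∀ h : 0 < i.val, 1 ≤ f ⟨i.val - 1, by omega⟩ ∧ ∑ j, f j ≤ d)),
    Nat.card_pi]
  rw [Finset.prod_congr rfl (fun i _ => cardC d hd i.val)]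
  rw [Fin.prod_univ_eq_prod_range (fun n => if n = 0 then 1 else (d + n - 1).choose n) (H+1)]
  rw [Finset.prod_range_succ']
  simp only [if_true, if_false, mul_one]
  rw [← Finset.Ico_add_one_right_eq_Icc, Finset.prod_Ico_eq_prod_range]
  rw [show H + 1 - 1 = H from rfl]
  exact Finset.prod_congr rfl (fun x hx => by rw [if_neg (Nat.succ_ne_zero x), add_comm 1 x])
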